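/- Let P and Q be orthogonal projection matrices on ℂ^n. The two binary projective measurements {P, I−P} and {Q, I−Q} are jointly measurable if and only if P and Q commute, i.e. PQ = QP. -/

import Mathlib

open Matrix Finset
open scoped ComplexOrder

noncomputable section

/-- A `d`-outcome POVM on `ℂ^n`: positive semidefinite effects summing to the identity. -/
def IsPOVM {n d : ℕ} (M : Fin d → Matrix (Fin n) (Fin n) ℂ) : Prop :=
  (∀ z, (M z).PosSemidef) ∧ ∑ z, M z = 1

/-- Coarse-graining of a `d`-outcome POVM along `f : Fin d → Fin k`. -/
def coarseGrain {n d k : ℕ} (M : Fin d → Matrix (Fin n) (Fin n) ℂ) (f : Fin d → Fin k)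
    (z' : Fin k) : Matrix (Fin n) (Fin n) ℂ :=
  ∑ z ∈ Finset.univ.filter (fun z => f z = z'), M z

/-- Compatibility of a finite family of `d`-outcome POVMs: existence of a parent POVM
`G` together with classical post-processings `p`. -/
def Compatible {n m d : ℕ} (M : Fin m → Fin d → Matrix (Fin n) (Fin n) ℂ) : Prop :=
  ∃ (L : ℕ) (G : Fin L → Matrix (Fin n) (Fin n) ℂ) (p : Fin m → Fin d → Fin L → ℝ),
    (∀ l, (G l).PosSemidef) ∧ (∑ l, G l = 1) ∧
    (∀ x z l, 0 ≤ p x z l) ∧ (∀ x l, ∑ z, p x z l = 1) ∧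
    (∀ x z, M x z = ∑ l, (p x z l : ℂ) • G l)

/-- Joint measurability of two POVMs via a joint parent POVM with marginals `A` and `B`. -/
def JointlyMeasurable {n a b : ℕ} (A : Fin a → Matrix (Fin n) (Fin n) ℂ)
    (B : Fin b → Matrix (Fin n) (Fin n) ℂ) : Prop :=
  ∃ G : Fin a → Fin b → Matrix (Fin n) (Fin n) ℂ,
    (∀ i j, (G i j).PosSemidef) ∧ (∑ i, ∑ j, G i j = 1) ∧
    (∀ i, A i = ∑ j, G i j) ∧ (∀ j, B j = ∑ i, G i j)

lemma proj_posSemidef {n : ℕ} {P : Matrix (Fin n) (Fin n) ℂ}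
    (hP : P.IsHermitian) (hP2 : P * P = P) : P.PosSemidef := by
  have : P = Pᴴ * P := by rw [hP.eq, hP2]
  rw [this]; exact posSemidef_conjTranspose_mul_self P

lemma comm_proj_psd {n : ℕ} {A B : Matrix (Fin n) (Fin n) ℂ}
    (hA : A.IsHermitian) (hA2 : A * A = A)
    (hB : B.IsHermitian) (hB2 : B * B = B) (hc : A * B = B * A) :
    (A * B).PosSemidef := by
  have : A * B = A * B * Aᴴ := by
    rw [hA.eq, mul_assoc, ← hc, ← mul_assoc, hA2]
  rw [this]; exact (proj_posSemidef hB hB2).mul_mul_conjTranspose_same A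

lemma le_proj_absorb {n : ℕ} {M P : Matrix (Fin n) (Fin n) ℂ}
    (hM : M.PosSemidef) (hPM : (P - M).PosSemidef)
    (hP : P.IsHermitian) (hP2 : P * P = P) : M * P = M := by
  have key : M * (1 - P) = 0 := by
    ext i j
    have hx : ∀ x : Fin n → ℂ, P *ᵥ x = 0 → M *ᵥ x = 0 := by
      intro x hx0
      have h1 : star x ⬝ᵥ (P - M) *ᵥ x = - (star x ⬝ᵥ M *ᵥ x) := by
        rw [sub_mulVec, dotProduct_sub, hx0, dotProduct_zero]; ring
      have h2 := hPM.dotProduct_mulVec_nonneg x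
      rw [h1] at h2
      have hle : star x ⬝ᵥ M *ᵥ x ≤ 0 := neg_nonneg.mp h2
      exact (hM.dotProduct_mulVec_zero_iff x).mp (le_antisymm hle (hM.dotProduct_mulVec_nonneg x))
    set x : Fin n → ℂ := fun k => (1 - P) k j with hxdef
    have hPx : P *ᵥ x = 0 := by
      ext i'
      have h0 : (P * (1 - P)) i' j = (0 : Matrix (Fin n) (Fin n) ℂ) i' j := by
        rw [show P * (1 - P) = 0 by rw [mul_sub, mul_one, hP2, sub_self]]
      simpa [mulVec, dotProduct, Matrix.mul_apply, hxdef] using h0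
    have := congrFun (hx x hPx) i
    simpa [mulVec, dotProduct, Matrix.mul_apply, hxdef] using this
  rw [mul_sub, mul_one] at key
  have := sub_eq_zero.mp key
  exact this.symm

theorem binary_projective_jointlyMeasurable_iff_commute
    {n : ℕ} (P Q : Matrix (Fin n) (Fin n) ℂ)
    (hP : P.IsHermitian) (hP2 : P * P = P)
    (hQ : Q.IsHermitian) (hQ2 : Q * Q = Q) :
    JointlyMeasurable ![P, 1 - P] ![Q, 1 - Q] ↔ P * Q = Q * P := by
  have h1Pherm : (1 - P).IsHermitian := Matrix.isHermitian_one.sub hP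
  have h1P2 : (1 - P) * (1 - P) = 1 - P := by noncomm_ring [hP2]
  have h1Qherm : (1 - Q).IsHermitian := Matrix.isHermitian_one.sub hQ
  have h1Q2 : (1 - Q) * (1 - Q) = 1 - Q := by noncomm_ring [hQ2]
  constructor
  · rintro ⟨G, hpos, hsum, hA, hB⟩
    have hP' : P = G 0 0 + G 0 1 := by
      have := hA 0; simpa [Fin.sum_univ_two] using this
    have hP1 : 1 - P = G 1 0 + G 1 1 := by
      have := hA 1; simpa [Fin.sum_univ_two] using this
    have hQ' : Q = G 0 0 + G 1 0 := by
      have := hB 0; simpa [Fin.sum_univ_two] using this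
    have h00P : G 0 0 * P = G 0 0 := by
      refine le_proj_absorb (hpos 0 0) ?_ hP hP2
      have : P - G 0 0 = G 0 1 := by rw [hP']; abel
      rw [this]; exact hpos 0 1
    have hP00 : P * G 0 0 = G 0 0 := by
      have := congrArg conjTranspose h00P
      rwa [conjTranspose_mul, hP.eq, (hpos 0 0).1.eq] at this
    have h11P : G 1 1 * (1 - P) = G 1 1 := by
      refine le_proj_absorb (hpos 1 1) ?_ h1Pherm h1P2
      have : (1 - P) - G 1 1 = G 1 0 := by rw [hP1]; abel
      rw [this]; exact hpos 1 0
    have h11P0 : G 1 1 * P = 0 := by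
      rw [mul_sub, mul_one] at h11P
      exact sub_eq_self.mp h11P
    have hG10 : G 1 0 = (1 - P) - G 1 1 := by rw [hP1]; abel
    have hPQ : P * Q = G 0 0 := by
      have hP110 : P * G 1 1 = 0 := by
        have := congrArg conjTranspose h11P0
        rwa [conjTranspose_mul, hP.eq, (hpos 1 1).1.eq, conjTranspose_zero] at this
      rw [hQ', mul_add, hP00, hG10, mul_sub, mul_sub, mul_one, hP2, hP110]
      abel
    have hQP : Q * P = G 0 0 := by
      rw [hQ', add_mul, h00P, hG10, sub_mul, sub_mul, one_mul, hP2, h11P0]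
      abel
    rw [hPQ, hQP]
  · intro hcomm
    have hc2 : P * (1 - Q) = (1 - Q) * P := by
      rw [mul_sub, sub_mul, mul_one, one_mul, hcomm]
    have hc3 : (1 - P) * Q = Q * (1 - P) := by
      rw [mul_sub, sub_mul, mul_one, one_mul, hcomm]
    have hc4 : (1 - P) * (1 - Q) = (1 - Q) * (1 - P) := by
      noncomm_ring [hcomm]
    refine ⟨![![P * Q, P * (1 - Q)], ![(1 - P) * Q, (1 - P) * (1 - Q)]], ?_, ?_, ?_, ?_⟩
    · intro i j
      fin_cases i <;> fin_cases j <;>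
        simp only [Matrix.cons_val', Matrix.cons_val_zero, Matrix.cons_val_one,
          Matrix.head_cons, Matrix.empty_val', Matrix.cons_val_fin_one, Matrix.head_fin_const]
      · exact comm_proj_psd hP hP2 hQ hQ2 hcomm
      · exact comm_proj_psd hP hP2 h1Qherm h1Q2 hc2
      · exact comm_proj_psd h1Pherm h1P2 hQ hQ2 hc3
      · exact comm_proj_psd h1Pherm h1P2 h1Qherm h1Q2 hc4
    · simp only [Fin.sum_univ_two, Matrix.cons_val', Matrix.cons_val_zero, Matrix.cons_val_one,
        Matrix.head_cons, Matrix.empty_val', Matrix.cons_val_fin_one, Matrix.head_fin_const]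
      noncomm_ring
    · intro i
      fin_cases i <;> simp [Fin.sum_univ_two] <;> noncomm_ring
    · intro j
      fin_cases j <;> simp [Fin.sum_univ_two] <;> noncomm_ring
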